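/- Let G be an r-regular simple graph on n vertices with girth at least 9, and let φ be a proper edge coloring of G. Then the number of distinct rainbow paths of length 7 (paths with 8 vertices all of whose 7 edges receive distinct colors) in G is at least (1/2)·n·r·(r−1)·(r−2)·(r−3)·(r−4)·(r−5)·(r−6). -/

import Mathlib

open SimpleGraph

universe u v

/-- An edge coloring is proper if distinct incident edges (edges sharing a vertex)
receive distinct colors. -/
def IsProperEdgeColoring {V : Type u} {C : Type v} (G : SimpleGraph V) (φ : Sym2 V → C) : Prop :=
  ∀ ⦃e₁ e₂ : Sym2 V⦄, e₁ ∈ G.edgeSet → e₂ ∈ G.edgeSet → e₁ ≠ e₂ →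
    (∃ v, v ∈ e₁ ∧ v ∈ e₂) → φ e₁ ≠ φ e₂

namespace RainbowAux

variable {V : Type u} {C : Type v}

def elist : List V → List (Sym2 V)
  | [] => []
  | [_] => []
  | a :: b :: t => s(a, b) :: elist (b :: t)

@[simp] lemma elist_nil : elist ([] : List V) = [] := rfl
@[simp] lemma elist_single (a : V) : elist [a] = [] := rfl
@[simp] lemma elist_cons_cons (a b : V) (t : List V) :
    elist (a :: b :: t) = s(a, b) :: elist (b :: t) := rfl

lemma elist_length : ∀ (l : List V), (elist l).length = l.length - 1
  | [] => rfl
  | [_] => rfl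
  | a :: b :: t => by simp [elist_length (b :: t)]

lemma mem_of_mem_elist : ∀ {l : List V} {e : Sym2 V}, e ∈ elist l → ∀ {x : V}, x ∈ e → x ∈ l
  | [], e, he, x, hx => by simp [elist] at he
  | [_], e, he, x, hx => by simp [elist] at he
  | a :: b :: t, e, he, x, hx => by
    rcases List.mem_cons.mp he with h | h
    · subst h
      rcases Sym2.mem_iff.mp hx with h | h
      · subst h; exact List.mem_cons_self
      · subst h; exact List.mem_cons_of_mem _ (List.mem_cons_self)
    · exact List.mem_cons_of_mem _ (mem_of_mem_elist h hx)

lemma head_edge_unique {a b : V} {t : List V} (hnd : (a :: b :: t).Nodup) {e : Sym2 V}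
    (he : e ∈ elist (a :: b :: t)) (hae : a ∈ e) : e = s(a, b) := by
  rcases List.mem_cons.mp he with h | h
  · exact h
  · exact absurd (mem_of_mem_elist h hae) (List.nodup_cons.mp hnd).1



lemma not_mem_elist_of_not_mem {a : V} {l : List V} (ha : a ∉ l) {e : Sym2 V}
    (he : e ∈ elist l) : a ∉ e := fun hae => ha (mem_of_mem_elist he hae)

lemma two_edge_internal (l : List V) : l.Nodup → ∀ x ∈ l, some x ≠ l.head? → some x ≠ l.getLast? →
      ∃ e₁ ∈ elist l, ∃ e₂ ∈ elist l, e₁ ≠ e₂ ∧ x ∈ e₁ ∧ x ∈ e₂ := by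
  induction l with
  | nil => intro _ x hx; simp at hx
  | cons a t ih =>
    intro hnd x hx hh hl
    have hxa : x ≠ a := by simpa using hh
    have hxt : x ∈ t := by
      rcases List.mem_cons.mp hx with h | h
      · exact absurd h hxa
      · exact h
    rcases t with _ | ⟨b, t₂⟩
    · simp at hxt
    by_cases hxb : x = b
    · rcases t₂ with _ | ⟨c, t₃⟩
      · exfalso; apply hl; simp [hxb]
      · subst hxb
        refine ⟨s(a, x), by simp, s(x, c), by simp, ?_, by simp, by simp⟩
        intro hcon
        rw [Sym2.eq_iff] at hcon
        rcases hcon with ⟨h1, _⟩ | ⟨h1, h2⟩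
        · exact hxa h1.symm
        · exact (List.nodup_cons.mp hnd).1 (by rw [h1]; simp)
    · obtain ⟨e₁, he₁, e₂, he₂, hne, hx1, hx2⟩ :=
        ih (List.nodup_cons.mp hnd).2 x hxt (by simpa using hxb)
          (by rw [← List.getLast?_cons_cons]; exact hl)
      exact ⟨e₁, List.mem_cons_of_mem _ he₁, e₂, List.mem_cons_of_mem _ he₂, hne, hx1, hx2⟩

lemma eq_of_same_edges [DecidableEq V] (l : List V) : ∀ (l' : List V), l.Nodup → l'.Nodup →
    l.length = l'.length → (elist l).toFinset = (elist l').toFinset → l.head? = l'.head? → l = l' := by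
  induction l with
  | nil =>
    intro l' _ _ hlen _ _
    rcases l' with _ | _
    · rfl
    · simp at hlen
  | cons a t ih =>
    intro l' hnd hnd' hlen hfs hh
    rcases l' with _ | ⟨a', t'⟩
    · simp at hlen
    have haa : a = a' := by simpa using hh
    subst haa
    rcases t with _ | ⟨b, t⟩
    · rcases t' with _ | _
      · rfl
      · simp at hlen
    rcases t' with _ | ⟨b', t'⟩
    · simp at hlen
    have h1 : s(a, b') ∈ elist (a :: b :: t) := by
      rw [← List.mem_toFinset, hfs, List.mem_toFinset]; simp
    have h2 : s(a, b') = s(a, b) := head_edge_unique hnd h1 (by simp)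
    have hbb : b' = b := by
      rw [Sym2.eq_iff] at h2
      rcases h2 with ⟨_, h⟩ | ⟨h1', h2'⟩
      · exact h
      · exact absurd (by rw [h1']; simp : a ∈ b :: t) (List.nodup_cons.mp hnd).1
    subst hbb
    have hnm : s(a, b') ∉ elist (b' :: t) :=
      fun h => (List.nodup_cons.mp hnd).1 (mem_of_mem_elist h (by simp))
    have hnm' : s(a, b') ∉ elist (b' :: t') :=
      fun h => (List.nodup_cons.mp hnd').1 (mem_of_mem_elist h (by simp))
    have hfs2 : (elist (b' :: t)).toFinset = (elist (b' :: t')).toFinset := by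
      ext e
      by_cases he : e = s(a, b')
      · subst he
        simp [List.mem_toFinset, hnm, hnm']
      · constructor
        · intro hmem
          have : e ∈ (elist (a :: b' :: t')).toFinset := by
            rw [← hfs]; simp at hmem ⊢; tauto
          rw [List.mem_toFinset]; simp at this; tauto
        · intro hmem
          have : e ∈ (elist (a :: b' :: t)).toFinset := by
            rw [hfs]; simp at hmem ⊢; tauto
          rw [List.mem_toFinset]; simp at this; tauto
    have := ih (b' :: t') (List.nodup_cons.mp hnd).2 (List.nodup_cons.mp hnd').2
      (by simpa using hlen) hfs2 rfl
    rw [this]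

def mkWalk (G : SimpleGraph V) : ∀ (a : V) (l : List V), List.Chain G.Adj a l →
    G.Walk a ((a :: l).getLast (List.cons_ne_nil a l))
  | _, [], _ => Walk.nil
  | a, b :: l, h =>
    (Walk.cons (List.chain_cons.mp h).1 (mkWalk G b l (List.chain_cons.mp h).2)).copy rfl
      (List.getLast_cons (List.cons_ne_nil b l)).symm

@[simp] lemma mkWalk_support (G : SimpleGraph V) : ∀ (a : V) (l : List V)
    (h : List.Chain G.Adj a l), (mkWalk G a l h).support = a :: l
  | _, [], _ => rfl
  | a, b :: l, h => by
    simp [mkWalk, mkWalk_support G b l (List.chain_cons.mp h).2]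

@[simp] lemma mkWalk_edges (G : SimpleGraph V) : ∀ (a : V) (l : List V)
    (h : List.Chain G.Adj a l), (mkWalk G a l h).edges = elist (a :: l)
  | _, [], _ => rfl
  | a, b :: l, h => by
    simp [mkWalk, mkWalk_edges G b l (List.chain_cons.mp h).2, elist_cons_cons]

lemma mkWalk_length (G : SimpleGraph V) (a : V) (l : List V) (h : List.Chain G.Adj a l) :
    (mkWalk G a l h).length = l.length := by
  have := congrArg List.length (mkWalk_support G a l h)
  rw [Walk.length_support] at this
  simpa using this

lemma no_short_return (G : SimpleGraph V) (hgirth : (9 : ℕ∞) ≤ G.egirth) {a : V} {t : List V}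
    (hc : List.Chain G.Adj a t) (hnd : (a :: t).Nodup) (hlen : (a :: t).length ≤ 8)
    {w : V} (hw : w ∈ t.tail) (hadj : G.Adj w a) : False := by
  rcases t with _ | ⟨b, t₂⟩
  · simp at hw
  simp only [List.tail_cons] at hw
  obtain ⟨t₃, t₄, ht⟩ := List.append_of_mem hw
  subst ht
  -- the prefix list a :: b :: t₃ ++ [w]
  have hpre : (a :: b :: (t₃ ++ [w])) <+: (a :: b :: (t₃ ++ w :: t₄)) := ⟨t₄, by simp⟩
  have hch' : List.Chain' G.Adj (a :: b :: (t₃ ++ [w])) :=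
    List.IsChain.prefix (l := a :: b :: (t₃ ++ w :: t₄)) hc hpre
  have hch : List.Chain G.Adj a (b :: (t₃ ++ [w])) := hch'
  have hndp : (a :: b :: (t₃ ++ [w])).Nodup := hnd.sublist hpre.sublist
  set L := b :: (t₃ ++ [w]) with hL
  have hend : ((a :: L).getLast (List.cons_ne_nil a L)) = w := by
    have h2 : (a :: L).getLast? = some w := by
      show (a :: b :: (t₃ ++ [w])).getLast? = some w
      rw [show a :: b :: (t₃ ++ [w]) = (a :: b :: t₃) ++ [w] by simp]
      exact List.getLast?_concat
    rwa [List.getLast?_eq_getLast (List.cons_ne_nil a L), Option.some_inj] at h2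
  let W : G.Walk a w := (mkWalk G a L hch).copy rfl hend
  have hWsupp : W.support = a :: L := by simp [W, mkWalk_support]
  have hWpath : W.IsPath := by rw [Walk.isPath_def, hWsupp]; exact hndp
  have hWedges : W.edges = elist (a :: L) := by simp [W, mkWalk_edges]
  have hnotmem : s(w, a) ∉ W.edges := by
    rw [hWedges, hL]
    intro hmem
    have := head_edge_unique hndp hmem (by simp)
    rw [Sym2.eq_iff] at this
    have hwb : w ≠ b := by
      have := (List.nodup_cons.mp hnd).2
      rw [List.nodup_cons] at this
      intro h; exact this.1 (h ▸ (by simp : w ∈ t₃ ++ w :: t₄))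
    have hwa : w ≠ a := by
      intro h
      exact (List.nodup_cons.mp hnd).1 (h ▸ (by simp : w ∈ b :: (t₃ ++ w :: t₄)))
    rcases this with ⟨h1, h2⟩ | ⟨h1, h2⟩
    · exact hwa h1
    · exact hwb h1
  let cyc : G.Walk w w := Walk.cons hadj W
  have hcyc : cyc.IsCycle := (Walk.cons_isCycle_iff W hadj).mpr ⟨hWpath, hnotmem⟩
  have hlen9 : (9 : ℕ∞) ≤ cyc.length := le_egirth.mp hgirth w cyc hcyc
  have hlen9' : 9 ≤ cyc.length := by exact_mod_cast hlen9
  have hclen : cyc.length = t₃.length + 3 := by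
    have : W.length = L.length := by simp [W, mkWalk_length]
    simp [cyc, this, hL]
  simp only [List.length_cons, List.length_append] at hlen
  omega

open Classical in
noncomputable def extS (G : SimpleGraph V) [Fintype V] (φ : Sym2 V → C) : List V → Finset V
  | [] => ∅
  | a :: t => Finset.univ.filter
      (fun w => G.Adj w a ∧ w ∉ a :: t ∧ φ s(w, a) ∉ (elist (a :: t)).map φ)

lemma mem_extS [Fintype V] {G : SimpleGraph V} {φ : Sym2 V → C} {w a : V} {t : List V} :
    w ∈ extS G φ (a :: t) ↔ G.Adj w a ∧ w ∉ a :: t ∧ φ s(w, a) ∉ (elist (a :: t)).map φ := by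
  classical
  simp [extS]

open Classical in
noncomputable def chainS (G : SimpleGraph V) [Fintype V] (φ : Sym2 V → C) : ℕ → Finset (List V)
  | 0 => Finset.univ.image (fun v => [v])
  | (k+1) => (chainS G φ k).biUnion (fun l => (extS G φ l).image (fun w => w :: l))

def Good (G : SimpleGraph V) (φ : Sym2 V → C) (l : List V) : Prop :=
  (∃ a t, l = a :: t ∧ List.Chain G.Adj a t) ∧ l.Nodup ∧ ((elist l).map φ).Nodup

lemma good_of_mem_chainS [Fintype V] {G : SimpleGraph V} {φ : Sym2 V → C} :
    ∀ k l, l ∈ chainS G φ k → Good G φ l ∧ l.length = k + 1 := by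
  classical
  intro k
  induction k with
  | zero =>
    intro l hl
    rw [chainS] at hl
    obtain ⟨v, _, rfl⟩ := Finset.mem_image.mp hl
    exact ⟨⟨⟨v, [], rfl, List.Chain.nil⟩, by simp, by simp⟩, rfl⟩
  | succ k ih =>
    intro l hl
    rw [chainS] at hl
    obtain ⟨l₀, hl₀, hmem⟩ := Finset.mem_biUnion.mp hl
    obtain ⟨w, hw, rfl⟩ := Finset.mem_image.mp hmem
    obtain ⟨⟨⟨a, t, rfl, hch⟩, hnd, hrb⟩, hlen⟩ := ih l₀ hl₀
    obtain ⟨hadj, hwm, hcol⟩ := mem_extS.mp hw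
    refine ⟨⟨⟨w, a :: t, rfl, List.chain_cons.mpr ⟨hadj, hch⟩⟩, ?_, ?_⟩, by simpa using hlen⟩
    · exact List.nodup_cons.mpr ⟨hwm, hnd⟩
    · rw [elist_cons_cons, List.map_cons]
      exact List.nodup_cons.mpr ⟨hcol, hrb⟩

lemma chainS_zero_card [Fintype V] (G : SimpleGraph V) (φ : Sym2 V → C) :
    (chainS G φ 0).card = Fintype.card V := by
  classical
  rw [chainS, Finset.card_image_of_injective _ (fun x y h => by injection h), Finset.card_univ]

lemma chainS_succ_card [Fintype V] (G : SimpleGraph V) (φ : Sym2 V → C) (k m : ℕ)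
    (hm : ∀ l ∈ chainS G φ k, m ≤ (extS G φ l).card) :
    (chainS G φ k).card * m ≤ (chainS G φ (k + 1)).card := by
  classical
  rw [chainS, Finset.card_biUnion]
  · calc (chainS G φ k).card * m = ∑ _l ∈ chainS G φ k, m := by
          rw [Finset.sum_const, smul_eq_mul, mul_comm]
      _ ≤ ∑ l ∈ chainS G φ k, ((extS G φ l).image (fun w => w :: l)).card := by
          apply Finset.sum_le_sum
          intro l hl
          rw [Finset.card_image_of_injective _ (fun x y h => by injection h)]
          exact hm l hl
  · intro l₁ h₁ l₂ h₂ hne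
    rw [Function.onFun, Finset.disjoint_left]
    intro x hx1 hx2
    obtain ⟨w₁, _, rfl⟩ := Finset.mem_image.mp hx1
    obtain ⟨w₂, _, heq⟩ := Finset.mem_image.mp hx2
    apply hne
    injection heq with _ h
    exact h.symm

lemma extS_card [Fintype V] [DecidableEq V] {G : SimpleGraph V} [DecidableRel G.Adj] {φ : Sym2 V → C} {r : ℕ}
    (hreg : G.IsRegularOfDegree r) (hgirth : (9 : ℕ∞) ≤ G.egirth)
    (hproper : ∀ ⦃e₁ e₂ : Sym2 V⦄, e₁ ∈ G.edgeSet → e₂ ∈ G.edgeSet → e₁ ≠ e₂ →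
      (∃ v, v ∈ e₁ ∧ v ∈ e₂) → φ e₁ ≠ φ e₂)
    {k : ℕ} (hk : k ≤ 6) {l : List V} (hl : l ∈ chainS G φ k) :
    r - k ≤ (extS G φ l).card := by
  classical
  obtain ⟨⟨⟨a, t, rfl, hch⟩, hnd, hrb⟩, hlen⟩ := good_of_mem_chainS k l hl
  set N := G.neighborFinset a with hN
  have hNcard : N.card = r := hreg a
  set B := N.filter (fun w => φ s(w, a) ∈ (elist (a :: t)).map φ) with hB
  have hBcard : B.card ≤ k := by
    have h1 : B.card ≤ ((elist (a :: t)).map φ).toFinset.card := by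
      apply Finset.card_le_card_of_injOn (fun w => φ s(w, a))
      · intro w hw
        rw [Finset.mem_coe, List.mem_toFinset]
        exact (Finset.mem_filter.mp (Finset.mem_coe.mp hw)).2
      · intro w₁ hw₁ w₂ hw₂ heq
        by_contra hne
        have ha₁ : G.Adj w₁ a := (G.mem_neighborFinset a w₁).mp (Finset.mem_coe.mp hw₁ |> Finset.filter_subset _ _) |>.symm
        have ha₂ : G.Adj w₂ a := (G.mem_neighborFinset a w₂).mp (Finset.mem_coe.mp hw₂ |> Finset.filter_subset _ _) |>.symm
        have hne' : s(w₁, a) ≠ s(w₂, a) := by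
          rw [Ne, Sym2.eq_iff]
          push_neg
          exact ⟨fun h _ => hne h, fun h => absurd h ha₁.ne⟩
        exact hproper (G.mem_edgeSet.mpr ha₁) (G.mem_edgeSet.mpr ha₂) hne'
          ⟨a, by simp, by simp⟩ heq
    have h2 : ((elist (a :: t)).map φ).toFinset.card ≤ k := by
      calc ((elist (a :: t)).map φ).toFinset.card ≤ ((elist (a :: t)).map φ).length :=
            List.toFinset_card_le _
        _ = (elist (a :: t)).length := List.length_map _
        _ = k := by rw [elist_length]; simp at hlen ⊢; omega
    exact h1.trans h2
  have hsub : N \ B ⊆ extS G φ (a :: t) := by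
    intro w hw
    rw [Finset.mem_sdiff] at hw
    obtain ⟨hwN, hwB⟩ := hw
    have hadj : G.Adj w a := ((G.mem_neighborFinset a w).mp hwN).symm
    have hcol : φ s(w, a) ∉ (elist (a :: t)).map φ := by
      intro hc
      exact hwB (Finset.mem_filter.mpr ⟨hwN, hc⟩)
    rw [mem_extS]
    refine ⟨hadj, ?_, hcol⟩
    intro hmem
    rcases List.mem_cons.mp hmem with h | h
    · exact hadj.ne h
    · rcases t with _ | ⟨b, t₂⟩
      · simp at h
      rcases List.mem_cons.mp h with h' | h'
      · apply hcol
        subst h'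
        rw [show s(w, a) = s(a, w) from Sym2.eq_swap]
        simp
      · exact no_short_return G hgirth hch hnd (by simp at hlen ⊢; omega) (by simpa using h') hadj
  calc r - k ≤ N.card - B.card := by omega
    _ = (N \ B).card := (Finset.card_sdiff_of_subset (Finset.filter_subset _ _)).symm
    _ ≤ _ := Finset.card_le_card hsub

lemma endpoint_cases [DecidableEq V] {l l' : List V} (hnd : l.Nodup) (hnd' : l'.Nodup)
    (hl : 2 ≤ l.length) (hl' : 2 ≤ l'.length)
    (hfs : (elist l).toFinset = (elist l').toFinset) :
    l'.head? = l.head? ∨ l'.head? = l.getLast? := by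
  rcases l with _ | ⟨a, _ | ⟨b, t⟩⟩
  · simp at hl
  · simp at hl
  rcases l' with _ | ⟨a', _ | ⟨b', t'⟩⟩
  · simp at hl'
  · simp at hl'
  by_contra hcon
  push_neg at hcon
  obtain ⟨h1, h2⟩ := hcon
  have hmem' : s(a', b') ∈ elist (a :: b :: t) := by
    rw [← List.mem_toFinset, hfs, List.mem_toFinset]; simp
  have ha'mem : a' ∈ a :: b :: t := mem_of_mem_elist hmem' (by simp)
  obtain ⟨e₁, he₁, e₂, he₂, hne, hx1, hx2⟩ :=
    two_edge_internal (a :: b :: t) hnd a' ha'mem (by simpa using h1) h2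
  have he₁' : e₁ ∈ elist (a' :: b' :: t') := by
    rw [← List.mem_toFinset, ← hfs, List.mem_toFinset]; exact he₁
  have he₂' : e₂ ∈ elist (a' :: b' :: t') := by
    rw [← List.mem_toFinset, ← hfs, List.mem_toFinset]; exact he₂
  exact hne ((head_edge_unique hnd' he₁' hx1).trans (head_edge_unique hnd' he₂' hx2).symm)

end RainbowAux
open RainbowAux in
theorem count_rainbow_paths_length_seven {V : Type u} [Fintype V] [DecidableEq V]
    (G : SimpleGraph V) [DecidableRel G.Adj] {r : ℕ}
    (hreg : G.IsRegularOfDegree r) (hgirth : (9 : ℕ∞) ≤ G.egirth)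
    {C : Type v} (φ : Sym2 V → C) (hproper : IsProperEdgeColoring G φ) :
    Fintype.card V * r * (r - 1) * (r - 2) * (r - 3) * (r - 4) * (r - 5) * (r - 6)
      ≤ 2 * ({s : Finset (Sym2 V) | ∃ (u v : V) (p : G.Walk u v),
          p.IsPath ∧ p.length = 7 ∧ (p.edges.map φ).Nodup ∧
          p.edges.toFinset = s}).ncard := by
  classical
  set n := Fintype.card V with hn
  have hstep : ∀ k, k ≤ 6 → (chainS G φ k).card * (r - k) ≤ (chainS G φ (k + 1)).card := by
    intro k hk
    exact chainS_succ_card G φ k (r - k) (fun l hl => extS_card hreg hgirth hproper hk hl)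
  have h0 : (chainS G φ 0).card = n := chainS_zero_card G φ
  have h1 : n * r ≤ (chainS G φ 1).card := by
    have := hstep 0 (by norm_num); rwa [h0, Nat.sub_zero] at this
  have h2 : n * r * (r - 1) ≤ (chainS G φ 2).card :=
    le_trans (Nat.mul_le_mul h1 le_rfl) (hstep 1 (by norm_num))
  have h3 : n * r * (r - 1) * (r - 2) ≤ (chainS G φ 3).card :=
    le_trans (Nat.mul_le_mul h2 le_rfl) (hstep 2 (by norm_num))
  have h4 : n * r * (r - 1) * (r - 2) * (r - 3) ≤ (chainS G φ 4).card :=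
    le_trans (Nat.mul_le_mul h3 le_rfl) (hstep 3 (by norm_num))
  have h5 : n * r * (r - 1) * (r - 2) * (r - 3) * (r - 4) ≤ (chainS G φ 5).card :=
    le_trans (Nat.mul_le_mul h4 le_rfl) (hstep 4 (by norm_num))
  have h6 : n * r * (r - 1) * (r - 2) * (r - 3) * (r - 4) * (r - 5) ≤ (chainS G φ 6).card :=
    le_trans (Nat.mul_le_mul h5 le_rfl) (hstep 5 (by norm_num))
  have h7 : n * r * (r - 1) * (r - 2) * (r - 3) * (r - 4) * (r - 5) * (r - 6)
      ≤ (chainS G φ 7).card :=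
    le_trans (Nat.mul_le_mul h6 le_rfl) (hstep 6 (by norm_num))
  set F : Finset (Finset (Sym2 V)) :=
    (chainS G φ 7).image (fun l => (elist l).toFinset) with hF
  have hup : (chainS G φ 7).card ≤ 2 * F.card := by
    apply Finset.card_le_mul_card_image
    intro s hs
    obtain ⟨l₀, hl₀, hgl₀⟩ := Finset.mem_image.mp hs
    obtain ⟨⟨_, hnd₀, _⟩, hlen₀⟩ := good_of_mem_chainS 7 l₀ hl₀
    calc ((chainS G φ 7).filter (fun l => (elist l).toFinset = s)).card
        ≤ ({l₀.head?, l₀.getLast?} : Finset (Option V)).card := by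
          apply Finset.card_le_card_of_injOn (fun l => l.head?)
          · intro l hl
            rw [Finset.mem_coe, Finset.mem_filter] at hl
            obtain ⟨hmem, hgl⟩ := hl
            obtain ⟨⟨_, hnd, _⟩, hlen⟩ := good_of_mem_chainS 7 l hmem
            have := endpoint_cases hnd₀ hnd (by omega) (by omega)
              (by rw [hgl₀, hgl])
            simpa using this
          · intro l₁ hl₁ l₂ hl₂ hh
            rw [Finset.mem_coe, Finset.mem_filter] at hl₁ hl₂
            obtain ⟨⟨_, hnd₁, _⟩, hlen₁⟩ := good_of_mem_chainS 7 l₁ hl₁.1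
            obtain ⟨⟨_, hnd₂, _⟩, hlen₂⟩ := good_of_mem_chainS 7 l₂ hl₂.1
            exact eq_of_same_edges l₁ l₂ hnd₁ hnd₂ (by omega)
              (by rw [hl₁.2, hl₂.2]) hh
      _ ≤ 2 := (Finset.card_insert_le _ _).trans (by simp)
  have hsub : (↑F : Set (Finset (Sym2 V))) ⊆ {s : Finset (Sym2 V) |
      ∃ (u v : V) (p : G.Walk u v), p.IsPath ∧ p.length = 7 ∧
        (p.edges.map φ).Nodup ∧ p.edges.toFinset = s} := by
    intro s hs
    obtain ⟨l, hl, rfl⟩ := Finset.mem_image.mp (Finset.mem_coe.mp hs)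
    obtain ⟨⟨⟨a, t, rfl, hch⟩, hnd, hrb⟩, hlen⟩ := good_of_mem_chainS 7 _ hl
    refine ⟨a, _, mkWalk G a t hch, ?_, ?_, ?_, ?_⟩
    · rw [SimpleGraph.Walk.isPath_def, mkWalk_support]; exact hnd
    · rw [mkWalk_length]; simp only [List.length_cons] at hlen; omega
    · rw [mkWalk_edges]; exact hrb
    · rw [mkWalk_edges]
  have hFcard : F.card ≤ ({s : Finset (Sym2 V) |
      ∃ (u v : V) (p : G.Walk u v), p.IsPath ∧ p.length = 7 ∧
        (p.edges.map φ).Nodup ∧ p.edges.toFinset = s}).ncard := by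
    rw [← Set.ncard_coe_finset]
    exact Set.ncard_le_ncard hsub (Set.toFinite _)
  calc n * r * (r - 1) * (r - 2) * (r - 3) * (r - 4) * (r - 5) * (r - 6)
      ≤ (chainS G φ 7).card := h7
    _ ≤ 2 * F.card := hup
    _ ≤ _ := Nat.mul_le_mul le_rfl hFcard
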